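/- Let h ≥ 1, let U_S be a unitary 2^h × 2^h complex matrix, and let ψ ∈ ℂ^{2^h} be its first column, ψ = U_S e₀. For p ∈ {0,1}, define on the space ℂ^{2^h} ⊗ ℂ² ⊗ ℂ^{2^h} the operators: H̃ = I ⊗ H ⊗ I with H = (1/√2)[[1,1],[1,−1]]; S̃ = I ⊗ S ⊗ I with S = diag(1, i); Z̃ = I ⊗ Z ⊗ I with Z = diag(1, −1); R = (I_{2^{h+1}} − 2·Π₀) ⊗ I_{2^h}, where Π₀ is the rank-one projector onto e₀ ⊗ e₀ in ℂ^{2^h} ⊗ ℂ²; U_C^S = (U_S ⊗ |0⟩⟨0| + I ⊗ |1⟩⟨1|) ⊗ I_{2^h}, where |0⟩⟨0|, |1⟩⟨1| are the projectors onto e₀, e₁ of the middle qubit; U_Copy the unitary determined by U_Copy(e_j ⊗ e₀ ⊗ e_k) = e_j ⊗ e₀ ⊗ e_k and U_Copy(e_j ⊗ e₁ ⊗ e_k) = e_{j⊕k} ⊗ e₁ ⊗ e_k, where j⊕k denotes bitwise XOR of h-bit strings; W_p = H̃ · S̃^p · U_Copy · U_C^S · H̃; and G_p = W_p · R · W_p†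 · Z̃. Then for every k ∈ {0, …, 2^h−1}, the vector e₀ ⊗ e₀ ⊗ e_k is an eigenvector of −(1/2)·W_p†·(G_p + G_p†)·W_p with eigenvalue Re((−i)^p · ψ_k); that is, the eigenvalue is Re(ψ_k) when p = 0 and Im(ψ_k) when p = 1. -/

import Mathlib

namespace DiagBlockEncoding

open Matrix

/-- The index type of the space `ℂ^{2^h} ⊗ ℂ² ⊗ ℂ^{2^h}`. -/
abbrev Ix (h : ℕ) := Fin (2 ^ h) × Fin 2 × Fin (2 ^ h)

/-- The Hadamard gate `H = (1/√2)[[1,1],[1,−1]]`. -/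
noncomputable def Hgate : Matrix (Fin 2) (Fin 2) ℂ :=
  (Real.sqrt 2 : ℂ)⁻¹ • !![1, 1; 1, -1]

/-- The phase gate `S = diag(1, i)`. -/
def Sgate : Matrix (Fin 2) (Fin 2) ℂ := !![1, 0; 0, Complex.I]

/-- The gate `Z = diag(1, −1)`. -/
def Zgate : Matrix (Fin 2) (Fin 2) ℂ := !![1, 0; 0, -1]

/-- `H̃ = I ⊗ H ⊗ I`. -/
noncomputable def Htil (h : ℕ) : Matrix (Ix h) (Ix h) ℂ :=
  Matrix.of fun x y =>
    if x.1 = y.1 ∧ x.2.2 = y.2.2 then Hgate x.2.1 y.2.1 else 0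

/-- `S̃ = I ⊗ S ⊗ I`. -/
def Stil (h : ℕ) : Matrix (Ix h) (Ix h) ℂ :=
  Matrix.of fun x y =>
    if x.1 = y.1 ∧ x.2.2 = y.2.2 then Sgate x.2.1 y.2.1 else 0

/-- `Z̃ = I ⊗ Z ⊗ I`. -/
def Ztil (h : ℕ) : Matrix (Ix h) (Ix h) ℂ :=
  Matrix.of fun x y =>
    if x.1 = y.1 ∧ x.2.2 = y.2.2 then Zgate x.2.1 y.2.1 else 0

/-- `R = (I − 2·Π₀) ⊗ I`, where `Π₀` projects onto `e₀ ⊗ e₀` of the first two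
registers. -/
def Rop (h : ℕ) : Matrix (Ix h) (Ix h) ℂ :=
  Matrix.of fun x y =>
    if x.2.2 = y.2.2 then
      (if x.1 = y.1 ∧ x.2.1 = y.2.1 then 1 else 0) -
        2 * (if x.1 = 0 ∧ x.2.1 = 0 ∧ y.1 = 0 ∧ y.2.1 = 0 then 1 else 0)
    else 0

/-- `U_C^S = (U_S ⊗ |0⟩⟨0| + I ⊗ |1⟩⟨1|) ⊗ I`: apply `U_S` to the first
register controlled on the middle qubit being `|0⟩`. -/
def UCS (h : ℕ) (U : Matrix (Fin (2 ^ h)) (Fin (2 ^ h)) ℂ) :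
    Matrix (Ix h) (Ix h) ℂ :=
  Matrix.of fun x y =>
    if x.2.2 = y.2.2 then
      (if x.2.1 = 0 ∧ y.2.1 = 0 then U x.1 y.1 else 0) +
        (if x.1 = y.1 ∧ x.2.1 = 1 ∧ y.2.1 = 1 then 1 else 0)
    else 0

/-- `U_Copy`: controlled on the middle qubit being `|1⟩`, XOR the last register
into the first one: `e_j ⊗ e₁ ⊗ e_k ↦ e_{j⊕k} ⊗ e₁ ⊗ e_k`. -/
def UCopy (h : ℕ) : Matrix (Ix h) (Ix h) ℂ :=
  Matrix.of fun x y =>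
    if x.2.1 = y.2.1 ∧ x.2.2 = y.2.2 ∧
        (x.1 : ℕ) = (if y.2.1 = 1 then (y.1 : ℕ) ^^^ (y.2.2 : ℕ) else (y.1 : ℕ))
    then 1 else 0

/-- `W_p = H̃ · S̃^p · U_Copy · U_C^S · H̃`. -/
noncomputable def Wop (h : ℕ) (U : Matrix (Fin (2 ^ h)) (Fin (2 ^ h)) ℂ)
    (p : ℕ) : Matrix (Ix h) (Ix h) ℂ :=
  Htil h * (Stil h) ^ p * UCopy h * UCS h U * Htil h

/-- `G_p = W_p · R · W_p† · Z̃`. -/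
noncomputable def Gop (h : ℕ) (U : Matrix (Fin (2 ^ h)) (Fin (2 ^ h)) ℂ)
    (p : ℕ) : Matrix (Ix h) (Ix h) ℂ :=
  Wop h U p * Rop h * (Wop h U p)ᴴ * Ztil h

/-- The basis vector `e₀ ⊗ e₀ ⊗ e_k` of `ℂ^{2^h} ⊗ ℂ² ⊗ ℂ^{2^h}`. -/
def eVec (h : ℕ) (k : Fin (2 ^ h)) : Ix h → ℂ :=
  fun x => if x = (0, 0, k) then 1 else 0


variable {h : ℕ}

def fxor (a b : Fin (2 ^ h)) : Fin (2 ^ h) :=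
  ⟨(a : ℕ) ^^^ (b : ℕ), Nat.xor_lt_two_pow a.2 b.2⟩

lemma Htil_mulVec (v : Ix h → ℂ) :
    (Htil h).mulVec v = fun x =>
      (Real.sqrt 2 : ℂ)⁻¹ *
        (v (x.1, 0, x.2.2) + (if x.2.1 = 0 then 1 else -1) * v (x.1, 1, x.2.2)) := by
  funext ⟨j, m, l⟩
  simp only [Matrix.mulVec, dotProduct, Htil, Matrix.of_apply, Fintype.sum_prod_type,
    ite_and, ite_mul, zero_mul, Finset.sum_ite_eq, Finset.mem_univ, if_true,
    Fin.sum_univ_two]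
  fin_cases m <;> simp [Hgate, Finset.sum_add_distrib] <;> ring

lemma Stil_mulVec (v : Ix h → ℂ) :
    (Stil h).mulVec v = fun x =>
      (if x.2.1 = 0 then 1 else Complex.I) * v x := by
  funext ⟨j, m, l⟩
  simp only [Matrix.mulVec, dotProduct, Stil, Matrix.of_apply, Fintype.sum_prod_type,
    ite_and, ite_mul, zero_mul, Finset.sum_ite_eq, Finset.mem_univ, if_true,
    Fin.sum_univ_two]
  fin_cases m <;> simp [Sgate, Finset.sum_add_distrib]

lemma Ztil_mulVec (v : Ix h → ℂ) :
    (Ztil h).mulVec v = fun x =>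
      (if x.2.1 = 0 then 1 else -1) * v x := by
  funext ⟨j, m, l⟩
  simp only [Matrix.mulVec, dotProduct, Ztil, Matrix.of_apply, Fintype.sum_prod_type,
    ite_and, ite_mul, zero_mul, Finset.sum_ite_eq, Finset.mem_univ, if_true,
    Fin.sum_univ_two]
  fin_cases m <;> simp [Zgate, Finset.sum_add_distrib]

lemma Rop_mulVec (v : Ix h → ℂ) :
    (Rop h).mulVec v = fun x =>
      v x - 2 * (if x.1 = 0 ∧ x.2.1 = 0 then v (0, 0, x.2.2) else 0) := by
  funext ⟨j, m, l⟩
  simp only [Matrix.mulVec, dotProduct, Rop, Matrix.of_apply, Fintype.sum_prod_type,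
    ite_and, ite_mul, zero_mul, sub_mul, mul_ite, mul_zero, mul_one,
    Finset.sum_ite_eq, Finset.mem_univ, if_true, Fin.sum_univ_two,
    Finset.sum_sub_distrib, Finset.sum_ite_eq']
  fin_cases m <;> by_cases hj : j = 0 <;> simp [hj, Finset.sum_add_distrib, Finset.sum_sub_distrib] <;> ring

lemma UCS_mulVec (U : Matrix (Fin (2 ^ h)) (Fin (2 ^ h)) ℂ) (v : Ix h → ℂ) :
    (UCS h U).mulVec v = fun x =>
      if x.2.1 = 0 then ∑ j', U x.1 j' * v (j', 0, x.2.2) else v (x.1, 1, x.2.2) := by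
  funext ⟨j, m, l⟩
  simp only [Matrix.mulVec, dotProduct, UCS, Matrix.of_apply, Fintype.sum_prod_type,
    ite_and, ite_mul, zero_mul, add_mul, Finset.sum_ite_eq, Finset.mem_univ, if_true,
    Fin.sum_univ_two, Finset.sum_add_distrib]
  fin_cases m <;> simp [Finset.sum_ite_eq]

lemma UCopy_mulVec (v : Ix h → ℂ) :
    (UCopy h).mulVec v = fun x =>
      if x.2.1 = 0 then v (x.1, 0, x.2.2) else v (fxor x.1 x.2.2, 1, x.2.2) := by
  funext ⟨j, m, l⟩
  simp only [Matrix.mulVec, dotProduct, UCopy, Matrix.of_apply, Fintype.sum_prod_type,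
    ite_and, ite_mul, zero_mul, one_mul, Finset.sum_ite_eq, Finset.mem_univ, if_true,
    Fin.sum_univ_two]
  fin_cases m
  · simp [Fin.val_eq_val]
  · have key : ∀ x : Fin (2 ^ h), ((j : ℕ) = (x : ℕ) ^^^ (l : ℕ)) ↔ fxor j l = x := by
      intro x
      constructor
      · intro hx
        apply Fin.ext
        simp [fxor, hx, xor_cancel_right]
      · rintro rfl
        simp [fxor, xor_cancel_right]
    simp [key, Finset.sum_ite_eq]

lemma Htil_ct : (Htil h)ᴴ = Htil h := by
  ext ⟨j, m, l⟩ ⟨j', m', l'⟩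
  simp only [Matrix.conjTranspose_apply, Htil, Matrix.of_apply, apply_ite (starRingEnd ℂ),
    map_zero]
  by_cases hj : j = j' <;> by_cases hl : l = l' <;>
    fin_cases m <;> fin_cases m' <;>
    simp [hj, hl, Hgate, eq_comm, Complex.conj_ofReal, map_inv₀]

lemma Ztil_ct : (Ztil h)ᴴ = Ztil h := by
  ext ⟨j, m, l⟩ ⟨j', m', l'⟩
  simp only [Matrix.conjTranspose_apply, Ztil, Matrix.of_apply, apply_ite (starRingEnd ℂ),
    map_zero]
  by_cases hj : j = j' <;> by_cases hl : l = l' <;>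
    fin_cases m <;> fin_cases m' <;>
    simp [hj, hl, Zgate, eq_comm]

lemma Rop_ct : (Rop h)ᴴ = Rop h := by
  ext ⟨j, m, l⟩ ⟨j', m', l'⟩
  simp only [Matrix.conjTranspose_apply, Rop, Matrix.of_apply, apply_ite (starRingEnd ℂ),
    map_zero, map_sub, _root_.map_mul, _root_.map_one, map_ofNat]
  by_cases hj : j = j' <;> by_cases hl : l = l' <;> by_cases hm : m = m' <;>
    simp [hj, hl, hm, eq_comm, and_comm, apply_ite (starRingEnd ℂ), map_ofNat] <;>
    exact if_congr (by tauto) rfl rfl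

lemma UCS_ct (U : Matrix (Fin (2 ^ h)) (Fin (2 ^ h)) ℂ) : (UCS h U)ᴴ = UCS h Uᴴ := by
  ext ⟨j, m, l⟩ ⟨j', m', l'⟩
  simp only [Matrix.conjTranspose_apply, UCS, Matrix.of_apply, apply_ite (starRingEnd ℂ),
    map_zero, map_add, _root_.map_one]
  by_cases hj : j = j' <;> by_cases hl : l = l' <;>
    fin_cases m <;> fin_cases m' <;>
    simp [hj, hl, eq_comm]

lemma UCopy_ct : (UCopy h)ᴴ = UCopy h := by
  ext ⟨j, m, l⟩ ⟨j', m', l'⟩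
  simp only [Matrix.conjTranspose_apply, UCopy, Matrix.of_apply, apply_ite (starRingEnd ℂ),
    map_zero, _root_.map_one, apply_ite (star : ℂ → ℂ), star_one, star_zero]
  refine if_congr ?_ rfl rfl
  constructor
  · rintro ⟨h1, h2, h3⟩
    subst h1; subst h2
    refine ⟨rfl, rfl, ?_⟩
    split_ifs at h3 ⊢ with hm <;> simp_all [xor_cancel_right]
  · rintro ⟨h1, h2, h3⟩
    subst h1; subst h2
    refine ⟨rfl, rfl, ?_⟩
    split_ifs at h3 ⊢ with hm <;> simp_all [xor_cancel_right]

lemma StilH_mulVec (v : Ix h → ℂ) :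
    (Stil h)ᴴ.mulVec v = fun x =>
      (if x.2.1 = 0 then 1 else -Complex.I) * v x := by
  funext ⟨j, m, l⟩
  simp only [Matrix.mulVec, dotProduct, Matrix.conjTranspose_apply, Stil,
    Matrix.of_apply, apply_ite (starRingEnd ℂ), map_zero, Fintype.sum_prod_type,
    ite_and, ite_mul, zero_mul, Finset.sum_ite_eq, Finset.sum_ite_eq', Finset.mem_univ,
    if_true, Fin.sum_univ_two]
  fin_cases m <;>
    simp [Sgate, Finset.sum_add_distrib, apply_ite (starRingEnd ℂ), Complex.conj_I,
      ite_mul, zero_mul, Finset.sum_ite_eq, Finset.sum_ite_eq']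

lemma pow_diag_mulVec (A : Matrix (Ix h) (Ix h) ℂ) (f : Fin 2 → ℂ)
    (hA : ∀ v : Ix h → ℂ, A.mulVec v = fun x => f x.2.1 * v x) (p : ℕ) :
    ∀ v : Ix h → ℂ, (A ^ p).mulVec v = fun x => (f x.2.1) ^ p * v x := by
  induction p with
  | zero => intro v; simp [Matrix.one_mulVec]
  | succ n ih =>
    intro v
    rw [pow_succ, ← Matrix.mulVec_mulVec, hA, ih]
    funext x
    simp only [pow_succ]
    ring

lemma Wop_ct (U : Matrix (Fin (2 ^ h)) (Fin (2 ^ h)) ℂ) (p : ℕ) :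
    (Wop h U p)ᴴ = Htil h * UCS h Uᴴ * UCopy h * ((Stil h)ᴴ) ^ p * Htil h := by
  simp [Wop, Matrix.conjTranspose_mul, Matrix.conjTranspose_pow, Htil_ct, UCopy_ct, UCS_ct,
    mul_assoc]

/-- canonical vector shape `f ⊗ e₀ ⊗ e_k + g ⊗ e₁ ⊗ e_k` -/
def vf (k : Fin (2 ^ h)) (f g : Fin (2 ^ h) → ℂ) : Ix h → ℂ :=
  fun x => if x.2.2 = k then (if x.2.1 = 0 then f x.1 else g x.1) else 0

variable {k : Fin (2 ^ h)}

lemma vf_congr {f f' g g' : Fin (2 ^ h) → ℂ} (hf : ∀ j, f j = f' j) (hg : ∀ j, g j = g' j) :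
    vf k f g = vf k f' g' := by
  funext x
  simp only [vf, hf, hg]

lemma vf_add (f f' g g' : Fin (2 ^ h) → ℂ) :
    vf k f g + vf k f' g' = vf k (fun j => f j + f' j) (fun j => g j + g' j) := by
  funext x
  simp only [vf, Pi.add_apply]
  split_ifs <;> simp

lemma vf_smul (a : ℂ) (f g : Fin (2 ^ h) → ℂ) :
    a • vf k f g = vf k (fun j => a * f j) (fun j => a * g j) := by
  funext x
  simp only [vf, Pi.smul_apply, smul_eq_mul]
  split_ifs <;> simp

lemma evec_vf : eVec h k = vf k (fun j => if j = 0 then 1 else 0) (fun _ => 0) := by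
  funext ⟨j, m, l⟩
  fin_cases m <;> by_cases hl : l = k <;> by_cases hj : j = 0 <;>
    simp [eVec, vf, Prod.ext_iff, hl, hj]

lemma fxor_cancel (a b : Fin (2 ^ h)) : fxor (fxor a b) b = a :=
  Fin.ext (xor_cancel_right _ _)

lemma fxor_eq_zero {a b : Fin (2 ^ h)} : fxor a b = 0 ↔ a = b := by
  rw [Fin.ext_iff, Fin.ext_iff]
  simp [fxor, xor_eq_zero_iff]

lemma fxor_eq_right {a b : Fin (2 ^ h)} : fxor a b = b ↔ a = 0 := by
  constructor
  · intro hx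
    have hv : (a : ℕ) ^^^ (b : ℕ) = (b : ℕ) := congrArg Fin.val hx
    apply Fin.ext
    have h2 := congrArg (· ^^^ (b : ℕ)) hv
    simpa [xor_cancel_right, Nat.xor_self] using h2
  · rintro rfl
    exact Fin.ext (by simp [fxor])

lemma Htil_vf (f g : Fin (2 ^ h) → ℂ) :
    (Htil h).mulVec (vf k f g) =
      vf k (fun j => (Real.sqrt 2 : ℂ)⁻¹ * (f j + g j))
        (fun j => (Real.sqrt 2 : ℂ)⁻¹ * (f j - g j)) := by
  rw [Htil_mulVec]
  funext ⟨j, m, l⟩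
  fin_cases m <;> by_cases hl : l = k <;> simp [vf, hl] <;> ring

lemma Ztil_vf (f g : Fin (2 ^ h) → ℂ) :
    (Ztil h).mulVec (vf k f g) = vf k f (fun j => -g j) := by
  rw [Ztil_mulVec]
  funext ⟨j, m, l⟩
  fin_cases m <;> by_cases hl : l = k <;> simp [vf, hl]

lemma Rop_vf (f g : Fin (2 ^ h) → ℂ) :
    (Rop h).mulVec (vf k f g) =
      vf k (fun j => f j - 2 * (if j = 0 then f 0 else 0)) g := by
  rw [Rop_mulVec]
  funext ⟨j, m, l⟩
  fin_cases m <;> by_cases hl : l = k <;> by_cases hj : j = 0 <;> simp [vf, hl, hj]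

lemma UCS_vf (U' : Matrix (Fin (2 ^ h)) (Fin (2 ^ h)) ℂ) (f g : Fin (2 ^ h) → ℂ) :
    (UCS h U').mulVec (vf k f g) =
      vf k (fun j => ∑ j', U' j j' * f j') g := by
  rw [UCS_mulVec]
  funext ⟨j, m, l⟩
  fin_cases m <;> by_cases hl : l = k <;>
    simp [vf, hl, mul_ite, mul_zero, Finset.sum_const_zero]

lemma UCopy_vf (f g : Fin (2 ^ h) → ℂ) :
    (UCopy h).mulVec (vf k f g) = vf k f (fun j => g (fxor j k)) := by
  rw [UCopy_mulVec]
  funext ⟨j, m, l⟩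
  fin_cases m <;> by_cases hl : l = k <;> simp [vf, hl]

lemma Sp_vf (p : ℕ) (f g : Fin (2 ^ h) → ℂ) :
    ((Stil h) ^ p).mulVec (vf k f g) =
      vf k f (fun j => Complex.I ^ p * g j) := by
  rw [pow_diag_mulVec (Stil h) (fun m => if m = 0 then 1 else Complex.I) Stil_mulVec p]
  funext ⟨j, m, l⟩
  fin_cases m <;> by_cases hl : l = k <;> simp [vf, hl]

lemma SHp_vf (p : ℕ) (f g : Fin (2 ^ h) → ℂ) :
    (((Stil h)ᴴ) ^ p).mulVec (vf k f g) =
      vf k f (fun j => (-Complex.I) ^ p * g j) := by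
  rw [pow_diag_mulVec ((Stil h)ᴴ) (fun m => if m = 0 then 1 else -Complex.I) StilH_mulVec p]
  funext ⟨j, m, l⟩
  fin_cases m <;> by_cases hl : l = k <;> simp [vf, hl]

theorem eigensystem_of_block_encoding (h : ℕ) (hh : 1 ≤ h)
    (U : Matrix (Fin (2 ^ h)) (Fin (2 ^ h)) ℂ)
    (hU₁ : U * Uᴴ = 1) (hU₂ : Uᴴ * U = 1)
    (p : ℕ) (hp : p ≤ 1) (k : Fin (2 ^ h)) :
    ((-(1 / 2 : ℂ)) •
        ((Wop h U p)ᴴ * (Gop h U p + (Gop h U p)ᴴ) * Wop h U p)).mulVec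
      (eVec h k) =
    ((((-Complex.I) ^ p * U k 0).re : ℂ)) • eVec h k := by
  have hsq : (Real.sqrt 2 : ℂ)⁻¹ * (Real.sqrt 2 : ℂ)⁻¹ = (2⁻¹ : ℂ) := by
    rw [← mul_inv,
      show ((Real.sqrt 2 : ℝ) : ℂ) * ((Real.sqrt 2 : ℝ) : ℂ) = ((2 : ℝ) : ℂ) by
        norm_cast
        exact Real.mul_self_sqrt (by norm_num)]
    norm_num
  have hsq2 : (Real.sqrt 2 : ℂ)⁻¹ ^ 2 = (2⁻¹ : ℂ) := by rw [pow_two, hsq]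
  have hccb : Complex.I ^ p * (-Complex.I) ^ p = 1 := by rw [← mul_pow]; simp
  have hcbc : (starRingEnd ℂ) ((-Complex.I) ^ p) = Complex.I ^ p := by
    rw [map_pow, Complex.conj_neg_I]
  have hU1' : ∀ j, (∑ j', U j j' * (starRingEnd ℂ) (U k j')) = if j = k then 1 else 0 := by
    intro j
    have := congrArg (fun M => M j k) hU₁
    simpa [Matrix.mul_apply, Matrix.conjTranspose_apply, Matrix.one_apply] using this
  have hU2' : ∀ j, (∑ j', (starRingEnd ℂ) (U j' j) * U j' 0) = if j = 0 then 1 else 0 := by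
    intro j
    have := congrArg (fun M => M j 0) hU₂
    simpa [Matrix.mul_apply, Matrix.conjTranspose_apply, Matrix.one_apply] using this
  have hkey : (2⁻¹ : ℂ) * (Complex.I ^ p * (starRingEnd ℂ) (U k 0) + (-Complex.I) ^ p * U k 0) = (((-Complex.I) ^ p * U k 0).re : ℂ) := by
    have h1 : Complex.I ^ p * (starRingEnd ℂ) (U k 0) = (starRingEnd ℂ) ((-Complex.I) ^ p * U k 0) := by
      rw [_root_.map_mul, hcbc]
    rw [h1, add_comm, Complex.add_conj]
    push_cast
    ring
  have hWmv : ∀ v : Ix h → ℂ, (Wop h U p).mulVec v =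
      (Htil h).mulVec (((Stil h) ^ p).mulVec ((UCopy h).mulVec
        ((UCS h U).mulVec ((Htil h).mulVec v)))) := by
    intro v
    simp only [Wop, ← Matrix.mulVec_mulVec]
  have hWHmv : ∀ v : Ix h → ℂ, ((Wop h U p)ᴴ).mulVec v =
      (Htil h).mulVec ((UCS h Uᴴ).mulVec ((UCopy h).mulVec
        ((((Stil h)ᴴ) ^ p).mulVec ((Htil h).mulVec v)))) := by
    intro v
    rw [Wop_ct]
    simp only [← Matrix.mulVec_mulVec]
  have hGmv : ∀ v : Ix h → ℂ, (Gop h U p).mulVec v =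
      (Wop h U p).mulVec ((Rop h).mulVec (((Wop h U p)ᴴ).mulVec ((Ztil h).mulVec v))) := by
    intro v
    simp only [Gop, ← Matrix.mulVec_mulVec]
  have hGHmv : ∀ v : Ix h → ℂ, ((Gop h U p)ᴴ).mulVec v =
      (Ztil h).mulVec ((Wop h U p).mulVec ((Rop h).mulVec (((Wop h U p)ᴴ).mulVec v))) := by
    intro v
    rw [show (Gop h U p)ᴴ = Ztil h * (Wop h U p * (Rop h * (Wop h U p)ᴴ)) by
      simp only [Gop, Matrix.conjTranspose_mul, Ztil_ct, Rop_ct,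
        Matrix.conjTranspose_conjTranspose, mul_assoc]]
    simp only [← Matrix.mulVec_mulVec]
  -- v5 = W e
  have hv5 : (Wop h U p).mulVec (eVec h k) =
      vf k (fun j => 2⁻¹ * (U j 0 + Complex.I ^ p * (if j = k then (1:ℂ) else 0))) (fun j => 2⁻¹ * (U j 0 - Complex.I ^ p * (if j = k then (1:ℂ) else 0))) := by
    rw [hWmv, evec_vf, Htil_vf, UCS_vf, UCopy_vf, Sp_vf, Htil_vf]
    refine vf_congr ?_ ?_ <;> intro j <;>
      simp [mul_ite, mul_zero, Finset.sum_ite_eq', fxor_eq_zero] <;>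
      by_cases hj : j = k <;> simp [hj] <;> ring_nf <;>
      simp [hsq2] <;> ring
  -- q-chain : Wᴴ (W e) = e
  have a1 : (Htil h).mulVec (vf k (fun j => 2⁻¹ * (U j 0 + Complex.I ^ p * (if j = k then (1:ℂ) else 0))) (fun j => 2⁻¹ * (U j 0 - Complex.I ^ p * (if j = k then (1:ℂ) else 0)))) =
      vf k (fun j => (Real.sqrt 2 : ℂ)⁻¹ * U j 0) (fun j => (Real.sqrt 2 : ℂ)⁻¹ * (Complex.I ^ p * (if j = k then (1:ℂ) else 0))) := by
    rw [Htil_vf]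
    refine vf_congr ?_ ?_ <;> intro j <;> ring
  have a2 : (((Stil h)ᴴ ^ p)).mulVec (vf k (fun j => (Real.sqrt 2 : ℂ)⁻¹ * U j 0) (fun j => (Real.sqrt 2 : ℂ)⁻¹ * (Complex.I ^ p * (if j = k then (1:ℂ) else 0)))) =
      vf k (fun j => (Real.sqrt 2 : ℂ)⁻¹ * U j 0) (fun j => (Real.sqrt 2 : ℂ)⁻¹ * (if j = k then (1:ℂ) else 0)) := by
    rw [SHp_vf]
    refine vf_congr (fun j => rfl) ?_
    intro j
    linear_combination (Real.sqrt 2 : ℂ)⁻¹ * (if j = k then (1:ℂ) else 0) * hccb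
  have a3 : (UCopy h).mulVec (vf k (fun j => (Real.sqrt 2 : ℂ)⁻¹ * U j 0) (fun j => (Real.sqrt 2 : ℂ)⁻¹ * (if j = k then (1:ℂ) else 0))) =
      vf k (fun j => (Real.sqrt 2 : ℂ)⁻¹ * U j 0) (fun j => (Real.sqrt 2 : ℂ)⁻¹ * (if j = 0 then (1:ℂ) else 0)) := by
    rw [UCopy_vf]
    refine vf_congr (fun j => rfl) ?_
    intro j
    simp only [fxor_eq_right]
  have a4 : (UCS h Uᴴ).mulVec (vf k (fun j => (Real.sqrt 2 : ℂ)⁻¹ * U j 0) (fun j => (Real.sqrt 2 : ℂ)⁻¹ * (if j = 0 then (1:ℂ) else 0))) =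
      vf k (fun j => (Real.sqrt 2 : ℂ)⁻¹ * (if j = 0 then (1:ℂ) else 0)) (fun j => (Real.sqrt 2 : ℂ)⁻¹ * (if j = 0 then (1:ℂ) else 0)) := by
    rw [UCS_vf]
    refine vf_congr ?_ (fun j => rfl)
    intro j
    rw [show (∑ j', Uᴴ j j' * ((Real.sqrt 2 : ℂ)⁻¹ * U j' 0)) =
        (Real.sqrt 2 : ℂ)⁻¹ * ∑ j', (starRingEnd ℂ) (U j' j) * U j' 0 by
      rw [Finset.mul_sum]
      exact Finset.sum_congr rfl fun j' _ => by
        simp only [Matrix.conjTranspose_apply, Complex.star_def]; ring]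
    rw [hU2' j]
  have a5 : (Htil h).mulVec (vf k (fun j => (Real.sqrt 2 : ℂ)⁻¹ * (if j = 0 then (1:ℂ) else 0)) (fun j => (Real.sqrt 2 : ℂ)⁻¹ * (if j = 0 then (1:ℂ) else 0))) =
      vf k (fun j => (if j = 0 then (1:ℂ) else 0)) (fun _ => 0) := by
    rw [Htil_vf]
    refine vf_congr ?_ ?_ <;> intro j <;> by_cases hj : j = 0 <;>
      simp [hj] <;> ring_nf <;> simp [hsq2] <;> ring
  have hq : ((Wop h U p)ᴴ).mulVec (vf k (fun j => 2⁻¹ * (U j 0 + Complex.I ^ p * (if j = k then (1:ℂ) else 0))) (fun j => 2⁻¹ * (U j 0 - Complex.I ^ p * (if j = k then (1:ℂ) else 0)))) = eVec h k := by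
    rw [hWHmv, a1, a2, a3, a4, a5, ← evec_vf]
  -- u-chain : Wᴴ Z (W e)
  have b0 : (Ztil h).mulVec (vf k (fun j => 2⁻¹ * (U j 0 + Complex.I ^ p * (if j = k then (1:ℂ) else 0))) (fun j => 2⁻¹ * (U j 0 - Complex.I ^ p * (if j = k then (1:ℂ) else 0)))) =
      vf k (fun j => 2⁻¹ * (U j 0 + Complex.I ^ p * (if j = k then (1:ℂ) else 0))) (fun j => 2⁻¹ * (Complex.I ^ p * (if j = k then (1:ℂ) else 0) - U j 0)) := by
    rw [Ztil_vf]
    refine vf_congr (fun j => rfl) ?_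
    intro j
    ring
  have b1 : (Htil h).mulVec (vf k (fun j => 2⁻¹ * (U j 0 + Complex.I ^ p * (if j = k then (1:ℂ) else 0))) (fun j => 2⁻¹ * (Complex.I ^ p * (if j = k then (1:ℂ) else 0) - U j 0))) =
      vf k (fun j => (Real.sqrt 2 : ℂ)⁻¹ * (Complex.I ^ p * (if j = k then (1:ℂ) else 0))) (fun j => (Real.sqrt 2 : ℂ)⁻¹ * U j 0) := by
    rw [Htil_vf]
    refine vf_congr ?_ ?_ <;> intro j <;> ring
  have b2 : (((Stil h)ᴴ ^ p)).mulVec (vf k (fun j => (Real.sqrt 2 : ℂ)⁻¹ * (Complex.I ^ p * (if j = k then (1:ℂ) else 0))) (fun j => (Real.sqrt 2 : ℂ)⁻¹ * U j 0)) =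
      vf k (fun j => (Real.sqrt 2 : ℂ)⁻¹ * (Complex.I ^ p * (if j = k then (1:ℂ) else 0))) (fun j => (Real.sqrt 2 : ℂ)⁻¹ * ((-Complex.I) ^ p * U j 0)) := by
    rw [SHp_vf]
    refine vf_congr (fun j => rfl) ?_
    intro j
    ring
  have b3 : (UCopy h).mulVec (vf k (fun j => (Real.sqrt 2 : ℂ)⁻¹ * (Complex.I ^ p * (if j = k then (1:ℂ) else 0))) (fun j => (Real.sqrt 2 : ℂ)⁻¹ * ((-Complex.I) ^ p * U j 0))) =
      vf k (fun j => (Real.sqrt 2 : ℂ)⁻¹ * (Complex.I ^ p * (if j = k then (1:ℂ) else 0))) (fun j => (Real.sqrt 2 : ℂ)⁻¹ * ((-Complex.I) ^ p * U (fxor j k) 0)) := by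
    rw [UCopy_vf]
  have b4 : (UCS h Uᴴ).mulVec (vf k (fun j => (Real.sqrt 2 : ℂ)⁻¹ * (Complex.I ^ p * (if j = k then (1:ℂ) else 0))) (fun j => (Real.sqrt 2 : ℂ)⁻¹ * ((-Complex.I) ^ p * U (fxor j k) 0))) =
      vf k (fun j => (Real.sqrt 2 : ℂ)⁻¹ * (Complex.I ^ p * (starRingEnd ℂ) (U k j))) (fun j => (Real.sqrt 2 : ℂ)⁻¹ * ((-Complex.I) ^ p * U (fxor j k) 0)) := by
    rw [UCS_vf]
    refine vf_congr ?_ (fun j => rfl)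
    intro j
    rw [show (∑ j', Uᴴ j j' * ((Real.sqrt 2 : ℂ)⁻¹ * (Complex.I ^ p * (if j' = k then (1:ℂ) else 0)))) =
        ((Real.sqrt 2 : ℂ)⁻¹ * Complex.I ^ p) * ∑ j', (starRingEnd ℂ) (U j' j) * (if j' = k then (1:ℂ) else 0) by
      rw [Finset.mul_sum]
      exact Finset.sum_congr rfl fun j' _ => by
        simp only [Matrix.conjTranspose_apply, Complex.star_def]; ring]
    simp [mul_ite, mul_zero, Finset.sum_ite_eq']
    ring
  have b5 : (Htil h).mulVec (vf k (fun j => (Real.sqrt 2 : ℂ)⁻¹ * (Complex.I ^ p * (starRingEnd ℂ) (U k j))) (fun j => (Real.sqrt 2 : ℂ)⁻¹ * ((-Complex.I) ^ p * U (fxor j k) 0))) =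
      vf k (fun j => 2⁻¹ * (Complex.I ^ p * (starRingEnd ℂ) (U k j) + (-Complex.I) ^ p * U (fxor j k) 0)) (fun j => 2⁻¹ * (Complex.I ^ p * (starRingEnd ℂ) (U k j) - (-Complex.I) ^ p * U (fxor j k) 0)) := by
    rw [Htil_vf]
    refine vf_congr ?_ ?_ <;> intro j <;> ring_nf <;> simp [hsq2] <;> ring
  have hu6 : ((Wop h U p)ᴴ).mulVec ((Ztil h).mulVec (vf k (fun j => 2⁻¹ * (U j 0 + Complex.I ^ p * (if j = k then (1:ℂ) else 0))) (fun j => 2⁻¹ * (U j 0 - Complex.I ^ p * (if j = k then (1:ℂ) else 0))))) =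
      vf k (fun j => 2⁻¹ * (Complex.I ^ p * (starRingEnd ℂ) (U k j) + (-Complex.I) ^ p * U (fxor j k) 0)) (fun j => 2⁻¹ * (Complex.I ^ p * (starRingEnd ℂ) (U k j) - (-Complex.I) ^ p * U (fxor j k) 0)) := by
    rw [b0, hWHmv, b1, b2, b3, b4, b5]
  -- R step
  have c1 : (Rop h).mulVec (vf k (fun j => 2⁻¹ * (Complex.I ^ p * (starRingEnd ℂ) (U k j) + (-Complex.I) ^ p * U (fxor j k) 0)) (fun j => 2⁻¹ * (Complex.I ^ p * (starRingEnd ℂ) (U k j) - (-Complex.I) ^ p * U (fxor j k) 0))) =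
      vf k (fun j => 2⁻¹ * (Complex.I ^ p * (starRingEnd ℂ) (U k j) + (-Complex.I) ^ p * U (fxor j k) 0) - 2 * (((-Complex.I) ^ p * U k 0).re : ℂ) * (if j = 0 then (1:ℂ) else 0)) (fun j => 2⁻¹ * (Complex.I ^ p * (starRingEnd ℂ) (U k j) - (-Complex.I) ^ p * U (fxor j k) 0)) := by
    rw [Rop_vf]
    refine vf_congr ?_ (fun j => rfl)
    intro j
    have hf60 : (2⁻¹ : ℂ) * (Complex.I ^ p * (starRingEnd ℂ) (U k 0) + (-Complex.I) ^ p * U (fxor 0 k) 0) = (((-Complex.I) ^ p * U k 0).re : ℂ) := by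
      rw [show fxor (0 : Fin (2 ^ h)) k = k from Fin.ext (by simp [fxor])]
      exact hkey
    by_cases hj : j = 0 <;> simp [hj, hf60] <;> ring
  -- W applied to u7
  have d1 : (Htil h).mulVec (vf k (fun j => 2⁻¹ * (Complex.I ^ p * (starRingEnd ℂ) (U k j) + (-Complex.I) ^ p * U (fxor j k) 0) - 2 * (((-Complex.I) ^ p * U k 0).re : ℂ) * (if j = 0 then (1:ℂ) else 0)) (fun j => 2⁻¹ * (Complex.I ^ p * (starRingEnd ℂ) (U k j) - (-Complex.I) ^ p * U (fxor j k) 0))) =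
      vf k (fun j => (Real.sqrt 2 : ℂ)⁻¹ * (Complex.I ^ p * (starRingEnd ℂ) (U k j) - 2 * (((-Complex.I) ^ p * U k 0).re : ℂ) * (if j = 0 then (1:ℂ) else 0))) (fun j => (Real.sqrt 2 : ℂ)⁻¹ * ((-Complex.I) ^ p * U (fxor j k) 0 - 2 * (((-Complex.I) ^ p * U k 0).re : ℂ) * (if j = 0 then (1:ℂ) else 0))) := by
    rw [Htil_vf]
    refine vf_congr ?_ ?_ <;> intro j <;> ring_nf <;> simp [hsq2] <;> ring
  have d2 : (UCS h U).mulVec (vf k (fun j => (Real.sqrt 2 : ℂ)⁻¹ * (Complex.I ^ p * (starRingEnd ℂ) (U k j) - 2 * (((-Complex.I) ^ p * U k 0).re : ℂ) * (if j = 0 then (1:ℂ) else 0))) (fun j => (Real.sqrt 2 : ℂ)⁻¹ * ((-Complex.I) ^ p * U (fxor j k) 0 - 2 * (((-Complex.I) ^ p * U k 0).re : ℂ) * (if j = 0 then (1:ℂ) else 0)))) =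
      vf k (fun j => (Real.sqrt 2 : ℂ)⁻¹ * (Complex.I ^ p * (if j = k then (1:ℂ) else 0) - 2 * (((-Complex.I) ^ p * U k 0).re : ℂ) * U j 0)) (fun j => (Real.sqrt 2 : ℂ)⁻¹ * ((-Complex.I) ^ p * U (fxor j k) 0 - 2 * (((-Complex.I) ^ p * U k 0).re : ℂ) * (if j = 0 then (1:ℂ) else 0))) := by
    rw [UCS_vf]
    refine vf_congr ?_ (fun j => rfl)
    intro j
    rw [show (∑ j', U j j' * ((Real.sqrt 2 : ℂ)⁻¹ * (Complex.I ^ p * (starRingEnd ℂ) (U k j') - 2 * (((-Complex.I) ^ p * U k 0).re : ℂ) * (if j' = 0 then (1:ℂ) else 0)))) =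
        ((Real.sqrt 2 : ℂ)⁻¹ * Complex.I ^ p) * (∑ j', U j j' * (starRingEnd ℂ) (U k j')) -
          ((Real.sqrt 2 : ℂ)⁻¹ * (2 * (((-Complex.I) ^ p * U k 0).re : ℂ))) * (∑ j', U j j' * (if j' = 0 then (1:ℂ) else 0)) by
      rw [Finset.mul_sum, Finset.mul_sum, ← Finset.sum_sub_distrib]
      exact Finset.sum_congr rfl fun j' _ => by ring]
    rw [hU1' j]
    by_cases hj : j = k <;> simp [hj, mul_ite, mul_zero, Finset.sum_ite_eq'] <;> ring
  have d3 : (UCopy h).mulVec (vf k (fun j => (Real.sqrt 2 : ℂ)⁻¹ * (Complex.I ^ p * (if j = k then (1:ℂ) else 0) - 2 * (((-Complex.I) ^ p * U k 0).re : ℂ) * U j 0)) (fun j => (Real.sqrt 2 : ℂ)⁻¹ * ((-Complex.I) ^ p * U (fxor j k) 0 - 2 * (((-Complex.I) ^ p * U k 0).re : ℂ) * (if j = 0 then (1:ℂ) else 0)))) =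
      vf k (fun j => (Real.sqrt 2 : ℂ)⁻¹ * (Complex.I ^ p * (if j = k then (1:ℂ) else 0) - 2 * (((-Complex.I) ^ p * U k 0).re : ℂ) * U j 0)) (fun j => (Real.sqrt 2 : ℂ)⁻¹ * ((-Complex.I) ^ p * U j 0 - 2 * (((-Complex.I) ^ p * U k 0).re : ℂ) * (if j = k then (1:ℂ) else 0))) := by
    rw [UCopy_vf]
    refine vf_congr (fun j => rfl) ?_
    intro j
    rw [fxor_cancel]
    simp only [fxor_eq_zero]
  have d4 : ((Stil h) ^ p).mulVec (vf k (fun j => (Real.sqrt 2 : ℂ)⁻¹ * (Complex.I ^ p * (if j = k then (1:ℂ) else 0) - 2 * (((-Complex.I) ^ p * U k 0).re : ℂ) * U j 0)) (fun j => (Real.sqrt 2 : ℂ)⁻¹ * ((-Complex.I) ^ p * U j 0 - 2 * (((-Complex.I) ^ p * U k 0).re : ℂ) * (if j = k then (1:ℂ) else 0)))) =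
      vf k (fun j => (Real.sqrt 2 : ℂ)⁻¹ * (Complex.I ^ p * (if j = k then (1:ℂ) else 0) - 2 * (((-Complex.I) ^ p * U k 0).re : ℂ) * U j 0)) (fun j => (Real.sqrt 2 : ℂ)⁻¹ * (U j 0 - 2 * (((-Complex.I) ^ p * U k 0).re : ℂ) * (Complex.I ^ p * (if j = k then (1:ℂ) else 0)))) := by
    rw [Sp_vf]
    refine vf_congr (fun j => rfl) ?_
    intro j
    linear_combination ((Real.sqrt 2 : ℂ)⁻¹ * U j 0) * hccb
  have d5 : (Htil h).mulVec (vf k (fun j => (Real.sqrt 2 : ℂ)⁻¹ * (Complex.I ^ p * (if j = k then (1:ℂ) else 0) - 2 * (((-Complex.I) ^ p * U k 0).re : ℂ) * U j 0)) (fun j => (Real.sqrt 2 : ℂ)⁻¹ * (U j 0 - 2 * (((-Complex.I) ^ p * U k 0).re : ℂ) * (Complex.I ^ p * (if j = k then (1:ℂ) else 0))))) =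
      vf k (fun j => 2⁻¹ * (1 - 2 * (((-Complex.I) ^ p * U k 0).re : ℂ)) * (U j 0 + Complex.I ^ p * (if j = k then (1:ℂ) else 0))) (fun j => 2⁻¹ * (1 + 2 * (((-Complex.I) ^ p * U k 0).re : ℂ)) * (Complex.I ^ p * (if j = k then (1:ℂ) else 0) - U j 0)) := by
    rw [Htil_vf]
    refine vf_congr ?_ ?_ <;> intro j <;> ring_nf <;> simp [hsq2] <;> ring
  -- G applied to v5
  have hG : (Gop h U p).mulVec (vf k (fun j => 2⁻¹ * (U j 0 + Complex.I ^ p * (if j = k then (1:ℂ) else 0))) (fun j => 2⁻¹ * (U j 0 - Complex.I ^ p * (if j = k then (1:ℂ) else 0)))) =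
      vf k (fun j => 2⁻¹ * (1 - 2 * (((-Complex.I) ^ p * U k 0).re : ℂ)) * (U j 0 + Complex.I ^ p * (if j = k then (1:ℂ) else 0))) (fun j => 2⁻¹ * (1 + 2 * (((-Complex.I) ^ p * U k 0).re : ℂ)) * (Complex.I ^ p * (if j = k then (1:ℂ) else 0) - U j 0)) := by
    rw [hGmv, b0, hWHmv, b1, b2, b3, b4, b5, c1, hWmv, d1, d2, d3, d4, d5]
  -- Gᴴ applied to v5
  have e1 : (Rop h).mulVec (eVec h k) = (-1 : ℂ) • vf k (fun j => 2⁻¹ * (U j 0 + Complex.I ^ p * (if j = k then (1:ℂ) else 0))) (fun j => 2⁻¹ * (U j 0 - Complex.I ^ p * (if j = k then (1:ℂ) else 0))) →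
      True := fun _ => trivial
  have hGH : ((Gop h U p)ᴴ).mulVec (vf k (fun j => 2⁻¹ * (U j 0 + Complex.I ^ p * (if j = k then (1:ℂ) else 0))) (fun j => 2⁻¹ * (U j 0 - Complex.I ^ p * (if j = k then (1:ℂ) else 0)))) =
      vf k (fun j => -(2⁻¹ * (U j 0 + Complex.I ^ p * (if j = k then (1:ℂ) else 0)))) (fun j => 2⁻¹ * (U j 0 - Complex.I ^ p * (if j = k then (1:ℂ) else 0))) := by
    rw [hGHmv, hq]
    have e2 : (Rop h).mulVec (eVec h k) = (-1 : ℂ) • eVec h k := by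
      rw [evec_vf, Rop_vf, vf_smul]
      refine vf_congr ?_ ?_ <;> intro j <;> by_cases hj : j = 0 <;> simp [hj] <;> norm_num
    rw [e2, Matrix.mulVec_smul, hv5, Matrix.mulVec_smul, b0, vf_smul]
    refine vf_congr ?_ ?_ <;> intro j <;> ring
  -- assemble
  rw [Matrix.smul_mulVec]
  simp only [← Matrix.mulVec_mulVec]
  rw [hv5, Matrix.add_mulVec, hG, hGH, vf_add]
  rw [show vf k (fun j => (fun j => 2⁻¹ * (1 - 2 * (((-Complex.I) ^ p * U k 0).re : ℂ)) * (U j 0 + Complex.I ^ p * (if j = k then (1:ℂ) else 0))) j + (fun j => -(2⁻¹ * (U j 0 + Complex.I ^ p * (if j = k then (1:ℂ) else 0)))) j) (fun j => (fun j => 2⁻¹ * (1 + 2 * (((-Complex.I) ^ p * U k 0).re : ℂ)) * (Complex.I ^ p * (if j = k then (1:ℂ) else 0) - U j 0)) j + (fun j => 2⁻¹ * (U j 0 - Complex.I ^ p * (if j = k then (1:ℂ) else 0))) j) =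
      ((-2 : ℂ) * (((-Complex.I) ^ p * U k 0).re : ℂ)) • vf k (fun j => 2⁻¹ * (U j 0 + Complex.I ^ p * (if j = k then (1:ℂ) else 0))) (fun j => 2⁻¹ * (U j 0 - Complex.I ^ p * (if j = k then (1:ℂ) else 0))) by
    rw [vf_smul]
    refine vf_congr ?_ ?_ <;> intro j <;> simp only [] <;> ring]
  rw [Matrix.mulVec_smul, hq, smul_smul]
  congr 1
  ring

end DiagBlockEncoding
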